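/- Let Y be a free ℤ-module of finite rank, B : Y × Y → ℤ a symmetric ℤ-bilinear form, α ∈ Y, and Q ∈ ℤ with B(α,α) = 2Q. Assume Q divides B(α, y) for every y ∈ Y. Let n be a positive integer, set n_α = n / gcd(n, Q), and let Λ = { x ∈ Y : n divides B(x,y) for all y ∈ Y }. Then n_α·α ∈ Λ, and conversely, for every integer c such that c·α ∈ Λ, the integer n_α divides 2c. -/

import Mathlib

/-- With `Λ = {x : n ∣ B(x,y) for all y}` and `n_α = n / gcd(n, Q)`, one has
`n_α • α ∈ Λ`, and `c • α ∈ Λ` implies `n_α ∣ 2 c`: that is,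
`n_α ℤα ⊆ Λ ∩ ℚα ⊆ (n_α/2) ℤα`. -/
theorem lattice_intersection_with_coroot_line
    (Y : Type*) [AddCommGroup Y] [Module ℤ Y] [Module.Free ℤ Y] [Module.Finite ℤ Y]
    (B : Y →ₗ[ℤ] Y →ₗ[ℤ] ℤ) (hsymm : ∀ y y' : Y, B y y' = B y' y)
    (α : Y) (Q : ℤ) (hQ : B α α = 2 * Q)
    (hdvd : ∀ y : Y, Q ∣ B α y)
    (n : ℕ) (hn : 0 < n)
    (nα : ℕ) (hnα : nα = n / Int.gcd (n : ℤ) Q) :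
    (∀ y : Y, (n : ℤ) ∣ B ((nα : ℤ) • α) y) ∧
    (∀ c : ℤ, (∀ y : Y, (n : ℤ) ∣ B (c • α) y) → (nα : ℤ) ∣ 2 * c) := by
  set g : ℕ := Int.gcd (n : ℤ) Q with hg
  have hgn : (g : ℤ) ∣ (n : ℤ) := Int.gcd_dvd_left _ _
  have hgQ : (g : ℤ) ∣ Q := Int.gcd_dvd_right _ _
  have hg0 : 0 < g := by
    have : (n : ℤ) ≠ 0 := by exact_mod_cast hn.ne'
    exact Int.gcd_pos_of_ne_zero_left _ this
  have hmul : (nα : ℤ) * (g : ℤ) = (n : ℤ) := by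
    have hgn' : g ∣ n := by exact_mod_cast hgn
    have : nα * g = n := by
      rw [hnα]; exact Nat.div_mul_cancel hgn'
    exact_mod_cast this
  constructor
  · intro y
    have : B ((nα : ℤ) • α) y = (nα : ℤ) * B α y := by simp
    rw [this]
    obtain ⟨k, hk⟩ := hdvd y
    obtain ⟨m, hm⟩ := hgQ
    rw [hk, hm, ← hmul]
    ring_nf
    exact Dvd.intro (m * k) (by ring)
  · intro c hc
    rcases eq_or_ne Q 0 with hQ0 | hQ0
    · have : nα = 1 := by
        rw [hnα, hg, hQ0]
        simp only [Int.gcd_zero_right, Int.natAbs_natCast]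
        exact Nat.div_self hn
      simp [this]
    · have h1 : (n : ℤ) ∣ c * (2 * Q) := by
        have := hc α
        simpa [hQ, mul_assoc] using this
      obtain ⟨m, hm⟩ := hgQ
      have hg0' : (g : ℤ) ≠ 0 := by exact_mod_cast hg0.ne'
      have h2 : (nα : ℤ) ∣ 2 * c * m := by
        have : (nα : ℤ) * (g : ℤ) ∣ (2 * c * m) * (g : ℤ) := by
          rw [hmul]
          have : c * (2 * Q) = (2 * c * m) * g := by rw [hm]; ring
          rw [← this]; exact h1
        exact (mul_dvd_mul_iff_right hg0').mp this
      have hcop : IsCoprime (nα : ℤ) m := by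
        have := Int.gcd_div_gcd_div_gcd (i := (n:ℤ)) (j := Q) (by exact_mod_cast hg0)
        have hn' : (n : ℤ) / g = nα := by
          rw [← hmul, Int.mul_ediv_cancel _ hg0']
        have hm' : Q / g = m := by rw [hm]; exact Int.mul_ediv_cancel_left _ hg0'
        rw [hn', hm'] at this
        exact Int.isCoprime_iff_gcd_eq_one.mpr this
      exact (IsCoprime.dvd_of_dvd_mul_right hcop) h2
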